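/- Completeness of the BPEL/PiCore bisimulation: for every BPEL activity B, PiCore event system ES and state s, if B and ES are trace-equivalent at s (Σ ⊢ (B,s) ≈≈ (ES,s)), then they are bisimilar at s (Σ ⊢ (B,s) ≈ (ES,s)). -/

import Mathlib

namespace PiCore

/-- Event systems of the PiCore event specification language. -/
inductive EventSys (Lbl Prog St : Type) : Type where
  | basic (ev : Set (Lbl × Set St × Prog))
  | atom (ev : Set (Lbl × Set St × Prog))
  | trig (P : Prog)
  | seq (S1 S2 : EventSys Lbl Prog St)
  | choice (S1 S2 : EventSys Lbl Prog St)
  | join (S1 S2 : EventSys Lbl Prog St)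
  | iter (b : Set St) (S : EventSys Lbl Prog St)

/-- Transition kinds of event systems: anonymous τ, event entry, atomic event entry. -/
inductive TranKind (Lbl : Type) : Type where
  | tau
  | evt (l : Lbl)
  | aevt (l : Lbl)

variable {Lbl Prog St Env : Type} (K : Type)
variable (ptran : Env → Prog × St → Prog × St → Prop) (bot : Prog)

/-- Labelled small-step semantics of event systems. -/
inductive esStep (Γ : Env) :
    EventSys Lbl Prog St × St → TranKind Lbl × K → EventSys Lbl Prog St × St → Prop where
  | basicEvt {ev : Set (Lbl × Set St × Prog)} {l g P s κ}
      (h1 : (l, g, P) ∈ ev) (h2 : s ∈ g) :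
      esStep Γ (.basic ev, s) (.evt l, κ) (.trig P, s)
  | atomEvt {ev : Set (Lbl × Set St × Prog)} {l g P s t κ}
      (h1 : (l, g, P) ∈ ev) (h2 : s ∈ g)
      (h3 : Relation.ReflTransGen (fun c c' => ptran Γ c c') (P, s) (bot, t)) :
      esStep Γ (.atom ev, s) (.aevt l, κ) (.trig bot, t)
  | trigEvt {P Q s t κ} (h : ptran Γ (P, s) (Q, t)) :
      esStep Γ (.trig P, s) (.tau, κ) (.trig Q, t)
  | seqStep {S1 S1' S2 s t} {δ : TranKind Lbl × K}
      (h : esStep Γ (S1, s) δ (S1', t)) (hne : S1' ≠ .trig bot) :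
      esStep Γ (.seq S1 S2, s) δ (.seq S1' S2, t)
  | seqFin {S1 S2 s t} {δ : TranKind Lbl × K}
      (h : esStep Γ (S1, s) δ (.trig bot, t)) :
      esStep Γ (.seq S1 S2, s) δ (S2, t)
  | choice1 {S1 S2 S1' s t} {δ : TranKind Lbl × K}
      (h : esStep Γ (S1, s) δ (S1', t)) :
      esStep Γ (.choice S1 S2, s) δ (S1', t)
  | choice2 {S1 S2 S2' s t} {δ : TranKind Lbl × K}
      (h : esStep Γ (S2, s) δ (S2', t)) :
      esStep Γ (.choice S1 S2, s) δ (S2', t)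
  | join1 {S1 S2 S1' s t} {δ : TranKind Lbl × K}
      (h : esStep Γ (S1, s) δ (S1', t)) :
      esStep Γ (.join S1 S2, s) δ (.join S1' S2, t)
  | join2 {S1 S2 S2' s t} {δ : TranKind Lbl × K}
      (h : esStep Γ (S2, s) δ (S2', t)) :
      esStep Γ (.join S1 S2, s) δ (.join S1 S2', t)
  | joinFin {s κ} :
      esStep Γ (.join (.trig bot) (.trig bot), s) (.tau, κ) (.trig bot, s)
  | iterT {b S s κ} (h : s ∈ b) (hne : S ≠ .trig bot) :
      esStep Γ (.iter b S, s) (.tau, κ) (.seq S (.iter b S), s)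
  | iterF {b S s κ} (h : s ∉ b) :
      esStep Γ (.iter b S, s) (.tau, κ) (.trig bot, s)

/-- Linear computations of event systems. -/
inductive cpts (Γ : Env) : List (EventSys Lbl Prog St × St) → Prop where
  | one {S s} : cpts Γ [(S, s)]
  | env {S s t cs} (h : cpts Γ ((S, t) :: cs)) : cpts Γ ((S, s) :: (S, t) :: cs)
  | act {S1 S2 s t cs} {δ : TranKind Lbl × K}
      (h1 : esStep K ptran bot Γ (S1, s) δ (S2, t))
      (h2 : cpts Γ ((S2, t) :: cs)) : cpts Γ ((S1, s) :: (S2, t) :: cs)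

/-- Sequential lifting of a computation. -/
def liftSeq (Q : EventSys Lbl Prog St) (c : List (EventSys Lbl Prog St × St)) :
    List (EventSys Lbl Prog St × St) :=
  c.map fun p => (.seq p.1 Q, p.2)

/-- Modular computations of event systems. -/
inductive cptsM (Γ : Env) : List (EventSys Lbl Prog St × St) → Prop where
  | one {S s} : cptsM Γ [(S, s)]
  | env {S s t cs} (h : cptsM Γ ((S, t) :: cs)) : cptsM Γ ((S, s) :: (S, t) :: cs)
  | trigEvt {P Q s t cs} (h : ptran Γ (P, s) (Q, t))
      (h2 : cptsM Γ ((.trig Q, t) :: cs)) :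
      cptsM Γ ((.trig P, s) :: (.trig Q, t) :: cs)
  | basicEvt {ev : Set (Lbl × Set St × Prog)} {l g P s cs}
      (h1 : (l, g, P) ∈ ev) (h2 : s ∈ g)
      (h3 : cptsM Γ ((.trig P, s) :: cs)) :
      cptsM Γ ((.basic ev, s) :: (.trig P, s) :: cs)
  | atomEvt {ev : Set (Lbl × Set St × Prog)} {l g P s t cs}
      (h1 : (l, g, P) ∈ ev) (h2 : s ∈ g)
      (h3 : Relation.ReflTransGen (fun c c' => ptran Γ c c') (P, s) (bot, t))
      (h4 : cptsM Γ ((.trig bot, t) :: cs)) :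
      cptsM Γ ((.atom ev, s) :: (.trig bot, t) :: cs)
  | seqStep {S1 S1' S2 s t cs} {δ : TranKind Lbl × K}
      (h : esStep K ptran bot Γ (S1, s) δ (S1', t)) (hne : S1' ≠ .trig bot)
      (h2 : cptsM Γ ((.seq S1' S2, t) :: cs)) :
      cptsM Γ ((.seq S1 S2, s) :: (.seq S1' S2, t) :: cs)
  | seqFin {S1 S2 s t cs} {δ : TranKind Lbl × K}
      (h : esStep K ptran bot Γ (S1, s) δ (.trig bot, t))
      (h2 : cptsM Γ ((S2, t) :: cs)) :
      cptsM Γ ((.seq S1 S2, s) :: (S2, t) :: cs)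
  | chc1 {S1 S2 S1' s t cs} {δ : TranKind Lbl × K}
      (h : esStep K ptran bot Γ (S1, s) δ (S1', t))
      (h2 : cptsM Γ ((S1', t) :: cs)) :
      cptsM Γ ((.choice S1 S2, s) :: (S1', t) :: cs)
  | chc2 {S1 S2 S2' s t cs} {δ : TranKind Lbl × K}
      (h : esStep K ptran bot Γ (S2, s) δ (S2', t))
      (h2 : cptsM Γ ((S2', t) :: cs)) :
      cptsM Γ ((.choice S1 S2, s) :: (S2', t) :: cs)
  | join1 {S1 S2 S1' s t cs} {δ : TranKind Lbl × K}
      (h : esStep K ptran bot Γ (S1, s) δ (S1', t))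
      (h2 : cptsM Γ ((.join S1' S2, t) :: cs)) :
      cptsM Γ ((.join S1 S2, s) :: (.join S1' S2, t) :: cs)
  | join2 {S1 S2 S2' s t cs} {δ : TranKind Lbl × K}
      (h : esStep K ptran bot Γ (S2, s) δ (S2', t))
      (h2 : cptsM Γ ((.join S1 S2', t) :: cs)) :
      cptsM Γ ((.join S1 S2, s) :: (.join S1 S2', t) :: cs)
  | joinFin {s cs} (h : cptsM Γ ((.trig bot, s) :: cs)) :
      cptsM Γ ((.join (.trig bot) (.trig bot), s) :: (.trig bot, s) :: cs)
  | iterF {b S s cs} (h : s ∉ b) (h2 : cptsM Γ ((.trig bot, s) :: cs)) :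
      cptsM Γ ((.iter b S, s) :: (.trig bot, s) :: cs)
  | iterTOne {b S s cs} (h : s ∈ b) (h2 : cptsM Γ ((S, s) :: cs)) :
      cptsM Γ ((.iter b S, s) :: liftSeq (.iter b S) ((S, s) :: cs))
  | iterTMore {b S s t cs cs'} {δ : TranKind Lbl × K}
      (h : s ∈ b) (h2 : cptsM Γ ((S, s) :: cs))
      (h3 : esStep K ptran bot Γ (((S, s) :: cs).getLast (List.cons_ne_nil _ _)) δ
              (.trig bot, t))
      (h4 : cptsM Γ ((.iter b S, t) :: cs')) :
      cptsM Γ ((.iter b S, s) ::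
        (liftSeq (.iter b S) ((S, s) :: cs) ++ (.iter b S, t) :: cs'))



end PiCore

namespace BPEL

open PiCore

/-- An IMP-like program language: the terminal program ⊥, atomic state
transformations `basic f`, and sequencing. -/
inductive Imp (St : Type) : Type where
  | fin
  | basic (f : St → St)
  | seq (P Q : Imp St)

/-- The `SKIP` statement. -/
def SKIP (St : Type) : Imp St := .basic id

/-- Small-step semantics of the IMP-like language. -/
inductive impTran {St : Type} : Imp St × St → Imp St × St → Prop where
  | basic {f : St → St} {s : St} : impTran (.basic f, s) (.fin, f s)
  | seqStep {P P' Q : Imp St} {s t : St}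
      (h : impTran (P, s) (P', t)) (hne : P' ≠ .fin) :
      impTran (.seq P Q, s) (.seq P' Q, t)
  | seqFin {P Q : Imp St} {s t : St} (h : impTran (P, s) (.fin, t)) :
      impTran (.seq P Q, s) (Q, t)

/-- Flow element of a BPEL activity: optional targets (a join condition and a
list of target links) and optional sources (links with transition conditions). -/
structure FlowEle (St : Type) : Type where
  targets : Option ((St → Prop) × List String)
  sources : Option (List (String × (St → Prop)))

mutual
/-- Abstract syntax of (a core subset of) BPEL activities. -/
inductive Activity (St : Type) : Type where
  | invoke (fls : FlowEle St) (ptl ptt opn : String) (spc : St → St)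
      (cts : List (String × Activity St)) (cta : Activity St)
  | receive (fls : FlowEle St) (ptl ptt opn : String) (spc : St → St)
  | reply (fls : FlowEle St) (ptl ptt opn : String)
  | assign (fls : FlowEle St) (spc : St → St)
  | wait (fls : FlowEle St) (time : ℕ)
  | empty (fls : FlowEle St)
  | seq (A1 A2 : Activity St)
  | ifA (c : Set St) (A1 A2 : Activity St)
  | whileA (c : Set St) (A : Activity St)
  | flow (A1 A2 : Activity St)
  | pick (H1 H2 : EventHandler St)
  | fin

/-- BPEL event handlers. -/
inductive EventHandler (St : Type) : Type where
  | onMessage (ptl ptt opn : String) (spc : St → St) (A : Activity St)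
  | onAlarm (time : ℕ) (A : Activity St)
end

section Sem
variable {St : Type}
variable (tick : St → ℕ)
variable (targetsSat : Option ((St → Prop) × List String) → St → Prop)
variable (fireSources : Option (List (String × (St → Prop))) → St → St)

/-- Small-step semantics of BPEL event handlers. -/
inductive ehStep : EventHandler St → St → Activity St → St → Prop where
  | onMessage {ptl ptt opn spc A s} :
      ehStep (.onMessage ptl ptt opn spc A) s A (spc s)
  | onAlarm {time A s} (h : time > tick s) :
      ehStep (.onAlarm time A) s A s

/-- Small-step operational semantics of BPEL activities. -/
inductive bpelStep : Activity St → St → Activity St → St → Prop where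
  | invokeSuc {fls ptl ptt opn spc cts cta s}
      (h : targetsSat fls.targets s) :
      bpelStep (.invoke fls ptl ptt opn spc cts cta) s .fin
        (fireSources fls.sources (spc s))
  | invokeFault {fls ptl ptt opn spc cts cta s} {evh : Activity St}
      (h : targetsSat fls.targets s)
      (hm : evh ∈ cts.map Prod.snd ∨ evh = cta) :
      bpelStep (.invoke fls ptl ptt opn spc cts cta) s evh
        (fireSources fls.sources s)
  | receive {fls ptl ptt opn spc s} (h : targetsSat fls.targets s) :
      bpelStep (.receive fls ptl ptt opn spc) s .fin
        (fireSources fls.sources (spc s))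
  | reply {fls ptl ptt opn s} (h : targetsSat fls.targets s) :
      bpelStep (.reply fls ptl ptt opn) s .fin (fireSources fls.sources s)
  | assign {fls spc s} (h : targetsSat fls.targets s) :
      bpelStep (.assign fls spc) s .fin (fireSources fls.sources (spc s))
  | wait {fls time s} (h : targetsSat fls.targets s) (ht : time > tick s) :
      bpelStep (.wait fls time) s .fin (fireSources fls.sources s)
  | empty {fls s} (h : targetsSat fls.targets s) :
      bpelStep (.empty fls) s .fin (fireSources fls.sources s)
  | seqStep {A1 A1' A2 s t} (h : bpelStep A1 s A1' t) (hne : A1' ≠ .fin) :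
      bpelStep (.seq A1 A2) s (.seq A1' A2) t
  | seqFin {A1 A2 s t} (h : bpelStep A1 s .fin t) :
      bpelStep (.seq A1 A2) s A2 t
  | ifT {c A1 A2 s} (h : s ∈ c) : bpelStep (.ifA c A1 A2) s A1 s
  | ifF {c A1 A2 s} (h : s ∉ c) : bpelStep (.ifA c A1 A2) s A2 s
  | whileT {c A s} (h : s ∈ c) (hne : A ≠ .fin) :
      bpelStep (.whileA c A) s (.seq A (.whileA c A)) s
  | whileF {c A s} (h : s ∉ c) : bpelStep (.whileA c A) s .fin s
  | flow1 {A1 A1' A2 s t} (h : bpelStep A1 s A1' t) :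
      bpelStep (.flow A1 A2) s (.flow A1' A2) t
  | flow2 {A1 A2 A2' s t} (h : bpelStep A2 s A2' t) :
      bpelStep (.flow A1 A2) s (.flow A1 A2') t
  | flowFin {s} : bpelStep (.flow .fin .fin) s .fin s
  | pick1 {H1 H2 A s t} (h : ehStep tick H1 s A t) :
      bpelStep (.pick H1 H2) s A t
  | pick2 {H1 H2 A s t} (h : ehStep tick H2 s A t) :
      bpelStep (.pick H1 H2) s A t

end Sem

/-- Labels of events in the PiCore translation of BPEL, encoding the activity
kind and its partner-link / port-type / operation names. -/
inductive EvtLbl : Type where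
  | invoke (ptl ptt opn : String)
  | receive (ptl ptt opn : String)
  | reply (ptl ptt opn : String)
  | assign
  | wait
  | empty
  | ifT
  | ifF
  | onMessage (ptl ptt opn : String)
  | onAlarm

/-- Event systems of the BPEL translation. -/
abbrev ES (St : Type) : Type := EventSys EvtLbl (Imp St) St

/-- Nondeterministic choice of a list of event systems. -/
def chooseList {St : Type} : List (ES St) → ES St
  | [] => .trig .fin
  | [a] => a
  | a :: b :: xs => .choice a (chooseList (b :: xs))

section Compile
variable {St : Type}
variable (tick : St → ℕ)
variable (targetsSat : Option ((St → Prop) × List String) → St → Prop)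
variable (fireSources : Option (List (String × (St → Prop))) → St → St)

/-- The failure event of an `invoke` activity: it only fires the source links. -/
def failEvt (fls : FlowEle St) (ptl ptt opn : String) : ES St :=
  .atom {(EvtLbl.invoke ptl ptt opn, {s | targetsSat fls.targets s},
          Imp.basic (fireSources fls.sources))}

mutual
/-- The verified translation from BPEL activities to PiCore event systems. -/
def compile : Activity St → ES St
  | .invoke fls ptl ptt opn spc cts cta =>
      .choice
        (.atom {(EvtLbl.invoke ptl ptt opn, {s | targetsSat fls.targets s},
            Imp.seq (.basic spc) (.basic (fireSources fls.sources)))})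
        (chooseList
          (.seq (failEvt targetsSat fireSources fls ptl ptt opn) (compile cta) ::
            compileList fls ptl ptt opn cts))
  | .receive fls ptl ptt opn spc =>
      .atom {(EvtLbl.receive ptl ptt opn, {s | targetsSat fls.targets s},
          Imp.seq (.basic spc) (.basic (fireSources fls.sources)))}
  | .reply fls ptl ptt opn =>
      .atom {(EvtLbl.reply ptl ptt opn, {s | targetsSat fls.targets s},
          Imp.basic (fireSources fls.sources))}
  | .assign fls spc =>
      .atom {(EvtLbl.assign, {s | targetsSat fls.targets s},
          Imp.seq (.basic spc) (.basic (fireSources fls.sources)))}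
  | .wait fls time =>
      .atom {(EvtLbl.wait, {s | targetsSat fls.targets s ∧ time > tick s},
          Imp.basic (fireSources fls.sources))}
  | .empty fls =>
      .atom {(EvtLbl.empty, {s | targetsSat fls.targets s},
          Imp.basic (fireSources fls.sources))}
  | .seq A1 A2 => .seq (compile A1) (compile A2)
  | .ifA c A1 A2 =>
      .choice (.seq (.atom {(EvtLbl.ifT, c, SKIP St)}) (compile A1))
              (.seq (.atom {(EvtLbl.ifF, cᶜ, SKIP St)}) (compile A2))
  | .whileA c A => .iter c (compile A)
  | .flow A1 A2 => .join (compile A1) (compile A2)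
  | .pick H1 H2 => .choice (compileEH H1) (compileEH H2)
  | .fin => .trig .fin

/-- Translation of BPEL event handlers. -/
def compileEH : EventHandler St → ES St
  | .onMessage ptl ptt opn spc A =>
      .seq (.atom {(EvtLbl.onMessage ptl ptt opn, Set.univ, Imp.basic spc)})
           (compile A)
  | .onAlarm time A =>
      .seq (.atom {(EvtLbl.onAlarm, {s | time > tick s}, SKIP St)})
           (compile A)

/-- Translation of the fault handlers of an `invoke` activity. -/
def compileList (fls : FlowEle St) (ptl ptt opn : String) :
    List (String × Activity St) → List (ES St)
  | [] => []
  | (_, a) :: rest =>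
      .seq (failEvt targetsSat fireSources fls ptl ptt opn) (compile a) ::
        compileList fls ptl ptt opn rest
end

end Compile



section Bisim
variable {St : Type}
variable (tick : St → ℕ)
variable (targetsSat : Option ((St → Prop) × List String) → St → Prop)
variable (fireSources : Option (List (String × (St → Prop))) → St → St)

/-- The small-step semantics of the PiCore event systems used by the BPEL
translation (over the IMP-like language, with a trivial static configuration
and trivial event-system identifiers). -/
abbrev esStepB :
    ES St × St → PiCore.TranKind EvtLbl × Unit → ES St × St → Prop :=
  PiCore.esStep Unit (fun _ : Unit => impTran) Imp.fin ()

/-- Computations of BPEL activities: nonempty lists of configurations closed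
under singletons, environment steps and BPEL steps. -/
inductive bpelCpts : List (Activity St × St) → Prop where
  | one {B s} : bpelCpts [(B, s)]
  | env {B s t cs} (h : bpelCpts ((B, t) :: cs)) :
      bpelCpts ((B, s) :: (B, t) :: cs)
  | step {B B' s t cs}
      (h : bpelStep tick targetsSat fireSources B s B' t)
      (h2 : bpelCpts ((B', t) :: cs)) :
      bpelCpts ((B, s) :: (B', t) :: cs)

/-- Pointwise equivalence of a BPEL computation and a PiCore computation:
equal length, equal states at each position, and at each position the event
system is the translation of the activity. -/
def treq : List (Activity St × St) → List (ES St × St) → Prop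
  | [], [] => True
  | (B, s) :: tr1, (S, t) :: tr2 =>
      compile tick targetsSat fireSources B = S ∧ s = t ∧ treq tr1 tr2
  | _, _ => False

/-- Trace equivalence of a BPEL activity and a PiCore event system from a
common initial state: `Σ ⊢ (B,s) ≈≈ (ES,s)`. -/
def TraceEq (B : Activity St) (s : St) (S : ES St) : Prop :=
  (∀ tr : List (Activity St × St),
     bpelCpts tick targetsSat fireSources tr → tr.head? = some (B, s) →
     ∃ tr' : List (ES St × St),
       (PiCore.cpts Unit (fun _ : Unit => impTran) Imp.fin () tr' ∧
         tr'.head? = some (S, s)) ∧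
       treq tick targetsSat fireSources tr tr') ∧
  (∀ tr' : List (ES St × St),
     PiCore.cpts Unit (fun _ : Unit => impTran) Imp.fin () tr' →
     tr'.head? = some (S, s) →
     ∃ tr : List (Activity St × St),
       (bpelCpts tick targetsSat fireSources tr ∧ tr.head? = some (B, s)) ∧
       treq tick targetsSat fireSources tr tr')

/-- `R` is a bisimulation between BPEL activities and PiCore event systems. -/
def IsBisim (R : Activity St → St → ES St → Prop) : Prop :=
  ∀ B s S, R B s S →
    (∀ B' t, bpelStep tick targetsSat fireSources B s B' t →
      ∃ (δ : PiCore.TranKind EvtLbl × Unit) (S' : ES St),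
        esStepB (S, s) δ (S', t) ∧ R B' t S') ∧
    (∀ (δ : PiCore.TranKind EvtLbl × Unit) (S' : ES St) (t : St),
      esStepB (S, s) δ (S', t) →
      ∃ B' : Activity St,
        bpelStep tick targetsSat fireSources B s B' t ∧ R B' t S') ∧
    S = compile tick targetsSat fireSources B

/-- Bisimilarity of a BPEL activity and a PiCore event system at a state
(`Σ ⊢ (B,s) ≈ (ES,s)`): the greatest bisimulation. -/
def Bisim (B : Activity St) (s : St) (S : ES St) : Prop :=
  ∃ R : Activity St → St → ES St → Prop,
    IsBisim tick targetsSat fireSources R ∧ R B s S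

end Bisim

end BPEL


namespace BPEL
open PiCore

section Helpers
variable {St : Type}
variable (tick : St → ℕ)
variable (targetsSat : Option ((St → Prop) × List String) → St → Prop)
variable (fireSources : Option (List (String × (St → Prop))) → St → St)

local notation "RTG" => Relation.ReflTransGen (fun c c' : Imp St × St => impTran c c')

lemma rtg_fin {s t : St} (h : RTG (Imp.fin, s) (Imp.fin, t)) : t = s := by
  rcases h.cases_head with h | ⟨c, hc, _⟩
  · simpa using h.symm
  · cases hc

lemma rtg_basic {f : St → St} {s t : St} (h : RTG (Imp.basic f, s) (Imp.fin, t)) :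
    t = f s := by
  rcases h.cases_head with h | ⟨c, hc, h2⟩
  · simp at h
  · cases hc; exact rtg_fin h2

lemma rtg_seq2 {f g : St → St} {s t : St}
    (h : RTG (Imp.seq (.basic f) (.basic g), s) (Imp.fin, t)) : t = g (f s) := by
  rcases h.cases_head with h | ⟨c, hc, h2⟩
  · simp at h
  · cases hc with
    | seqStep h hne => cases h; exact absurd rfl hne
    | seqFin h => cases h; exact rtg_basic h2

lemma rtg_basic' {f : St → St} {s : St} : RTG (Imp.basic f, s) (Imp.fin, f s) :=
  Relation.ReflTransGen.single impTran.basic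

lemma rtg_seq2' {f g : St → St} {s : St} :
    RTG (Imp.seq (.basic f) (.basic g), s) (Imp.fin, g (f s)) :=
  Relation.ReflTransGen.head (impTran.seqFin impTran.basic)
    (Relation.ReflTransGen.single impTran.basic)

lemma compile_eq_trig {A : Activity St} {P : Imp St}
    (h : compile tick targetsSat fireSources A = .trig P) :
    A = .fin ∧ P = Imp.fin := by
  cases A <;> simp [compile] at h ⊢ <;> exact h.symm

lemma compile_ne_trig {A : Activity St} (hA : A ≠ .fin) {P : Imp St} :
    compile tick targetsSat fireSources A ≠ .trig P := fun h =>
  hA (compile_eq_trig tick targetsSat fireSources h).1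

lemma esStep_chooseList {l : List (ES St)} {s : St} {δ S' t}
    (h : esStepB (chooseList l, s) δ (S', t)) :
    ∃ x ∈ l, esStepB (x, s) δ (S', t) := by
  induction l with
  | nil =>
    simp only [chooseList] at h
    cases h with | trigEvt h => cases h
  | cons a l ih =>
    cases l with
    | nil => exact ⟨a, by simp, h⟩
    | cons b xs =>
      cases h with
      | choice1 h => exact ⟨a, by simp, h⟩
      | choice2 h =>
        obtain ⟨x, hx, h⟩ := ih h
        exact ⟨x, List.mem_cons_of_mem _ hx, h⟩

lemma esStep_chooseList' {l : List (ES St)} {x : ES St} {s : St} {δ S' t}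
    (hx : x ∈ l) (h : esStepB (x, s) δ (S', t)) :
    esStepB (chooseList l, s) δ (S', t) := by
  induction l with
  | nil => cases hx
  | cons a l ih =>
    cases l with
    | nil => simp at hx; subst hx; exact h
    | cons b xs =>
      rcases List.mem_cons.mp hx with rfl | hx
      · exact esStep.choice1 h
      · exact esStep.choice2 (ih hx)

lemma mem_compileList {fls : FlowEle St} {ptl ptt opn} {cts : List (String × Activity St)}
    {x : ES St}
    (h : x ∈ compileList tick targetsSat fireSources fls ptl ptt opn cts) :
    ∃ a ∈ cts.map Prod.snd,
      x = .seq (failEvt targetsSat fireSources fls ptl ptt opn)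
        (compile tick targetsSat fireSources a) := by
  induction cts with
  | nil => simp [compileList] at h
  | cons p rest ih =>
    obtain ⟨n, a⟩ := p
    simp only [compileList, List.mem_cons] at h
    rcases h with rfl | h
    · exact ⟨a, by simp, rfl⟩
    · obtain ⟨a', ha', rfl⟩ := ih h
      exact ⟨a', by simp [List.mem_cons] at ha' ⊢; tauto, rfl⟩

lemma mem_compileList' {fls : FlowEle St} {ptl ptt opn} {cts : List (String × Activity St)}
    {a : Activity St} (ha : a ∈ cts.map Prod.snd) :
    (EventSys.seq (failEvt targetsSat fireSources fls ptl ptt opn)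
        (compile tick targetsSat fireSources a)) ∈
      compileList tick targetsSat fireSources fls ptl ptt opn cts := by
  induction cts with
  | nil => simp at ha
  | cons p rest ih =>
    obtain ⟨n, b⟩ := p
    simp only [List.map_cons, List.mem_cons] at ha
    simp only [compileList, List.mem_cons]
    rcases ha with rfl | ha
    · exact Or.inl rfl
    · exact Or.inr (ih ha)

lemma esStep_failSeq {fls : FlowEle St} {ptl ptt opn} {a : Activity St} {s : St} {δ S' t}
    (h : esStepB (.seq (failEvt targetsSat fireSources fls ptl ptt opn)
        (compile tick targetsSat fireSources a), s) δ (S', t)) :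
    S' = compile tick targetsSat fireSources a ∧ t = fireSources fls.sources s ∧
      targetsSat fls.targets s := by
  cases h with
  | seqStep h hne => cases h with | atomEvt h1 h2 h3 => exact absurd rfl hne
  | seqFin h =>
    cases h with
    | atomEvt h1 h2 h3 =>
      simp only [failEvt, Set.mem_singleton_iff, Prod.mk.injEq] at h1
      obtain ⟨rfl, rfl, rfl⟩ := h1
      exact ⟨rfl, rtg_basic h3, h2⟩

lemma bpel_to_es {A : Activity St} {s : St} {A' : Activity St} {t : St}
    (h : bpelStep tick targetsSat fireSources A s A' t) :
    ∃ δ, esStepB (compile tick targetsSat fireSources A, s) δ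
      (compile tick targetsSat fireSources A', t) := by
  induction h with
  | @invokeSuc fls ptl ptt opn spc cts cta s h =>
    exact ⟨(.aevt (.invoke ptl ptt opn), ()),
      .choice1 (.atomEvt rfl h (rtg_seq2' ..))⟩
  | @invokeFault fls ptl ptt opn spc cts cta s evh h hm =>
    refine ⟨(.aevt (.invoke ptl ptt opn), ()), .choice2 ?_⟩
    have hstep : esStepB (EventSys.seq (failEvt targetsSat fireSources fls ptl ptt opn)
        (compile tick targetsSat fireSources evh), s)
        ((.aevt (.invoke ptl ptt opn), ()))
        (compile tick targetsSat fireSources evh, fireSources fls.sources s) :=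
      .seqFin (.atomEvt rfl h (rtg_basic' ..))
    refine esStep_chooseList' ?_ hstep
    rcases hm with hm | rfl
    · exact List.mem_cons_of_mem _ (mem_compileList' tick targetsSat fireSources hm)
    · exact List.mem_cons_self
  | @receive fls ptl ptt opn spc s h =>
    exact ⟨(.aevt (.receive ptl ptt opn), ()), .atomEvt rfl h (rtg_seq2' ..)⟩
  | @reply fls ptl ptt opn s h =>
    exact ⟨(.aevt (.reply ptl ptt opn), ()), .atomEvt rfl h (rtg_basic' ..)⟩
  | @assign fls spc s h =>
    exact ⟨(.aevt .assign, ()), .atomEvt rfl h (rtg_seq2' ..)⟩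
  | @wait fls time s h ht =>
    exact ⟨(.aevt .wait, ()), .atomEvt rfl ⟨h, ht⟩ (rtg_basic' ..)⟩
  | @empty fls s h =>
    exact ⟨(.aevt .empty, ()), .atomEvt rfl h (rtg_basic' ..)⟩
  | @seqStep A1 A1' A2 s t h hne ih =>
    obtain ⟨δ, hes⟩ := ih
    exact ⟨δ, .seqStep hes (compile_ne_trig tick targetsSat fireSources hne)⟩
  | @seqFin A1 A2 s t h ih =>
    obtain ⟨δ, hes⟩ := ih
    exact ⟨δ, .seqFin hes⟩
  | @ifT c A1 A2 s h =>
    exact ⟨(.aevt .ifT, ()), .choice1 (.seqFin (.atomEvt rfl h (rtg_basic' ..)))⟩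
  | @ifF c A1 A2 s h =>
    exact ⟨(.aevt .ifF, ()), .choice2 (.seqFin (.atomEvt rfl h (rtg_basic' ..)))⟩
  | @whileT c A s h hne =>
    exact ⟨(.tau, ()), .iterT h (compile_ne_trig tick targetsSat fireSources hne)⟩
  | @whileF c A s h =>
    exact ⟨(.tau, ()), .iterF h⟩
  | @flow1 A1 A1' A2 s t h ih =>
    obtain ⟨δ, hes⟩ := ih
    exact ⟨δ, .join1 hes⟩
  | @flow2 A1 A2 A2' s t h ih =>
    obtain ⟨δ, hes⟩ := ih
    exact ⟨δ, .join2 hes⟩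
  | @flowFin s =>
    exact ⟨(.tau, ()), .joinFin⟩
  | @pick1 H1 H2 A s t h =>
    cases h with
    | @onMessage ptl ptt opn spc A s =>
      exact ⟨(.aevt (.onMessage ptl ptt opn), ()),
        .choice1 (.seqFin (.atomEvt rfl trivial (rtg_basic' ..)))⟩
    | @onAlarm time A s h =>
      exact ⟨(.aevt .onAlarm, ()),
        .choice1 (.seqFin (.atomEvt rfl h (rtg_basic' ..)))⟩
  | @pick2 H1 H2 A s t h =>
    cases h with
    | @onMessage ptl ptt opn spc A s =>
      exact ⟨(.aevt (.onMessage ptl ptt opn), ()),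
        .choice2 (.seqFin (.atomEvt rfl trivial (rtg_basic' ..)))⟩
    | @onAlarm time A s h =>
      exact ⟨(.aevt .onAlarm, ()),
        .choice2 (.seqFin (.atomEvt rfl h (rtg_basic' ..)))⟩

lemma es_to_bpel' {c c' : ES St × St} {δ}
    (h : esStepB c δ c') :
    ∀ A : Activity St, compile tick targetsSat fireSources A = c.1 →
    ∃ A', bpelStep tick targetsSat fireSources A c.2 A' c'.2 ∧
      c'.1 = compile tick targetsSat fireSources A' := by
  induction h with
  | @basicEvt ev l g P s κ h1 h2 =>
    intro A hC
    exfalso; cases A <;> simp [compile] at hC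
  | @atomEvt ev l g P s t κ h1 h2 h3 =>
    intro A hC
    cases A <;> simp [compile] at hC
    case receive fls ptl ptt opn spc =>
      subst hC
      simp only [Set.mem_singleton_iff, Prod.mk.injEq] at h1
      obtain ⟨rfl, rfl, rfl⟩ := h1
      obtain rfl := rtg_seq2 h3
      exact ⟨.fin, .receive h2, rfl⟩
    case reply fls ptl ptt opn =>
      subst hC
      simp only [Set.mem_singleton_iff, Prod.mk.injEq] at h1
      obtain ⟨rfl, rfl, rfl⟩ := h1
      obtain rfl := rtg_basic h3
      exact ⟨.fin, .reply h2, rfl⟩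
    case assign fls spc =>
      subst hC
      simp only [Set.mem_singleton_iff, Prod.mk.injEq] at h1
      obtain ⟨rfl, rfl, rfl⟩ := h1
      obtain rfl := rtg_seq2 h3
      exact ⟨.fin, .assign h2, rfl⟩
    case wait fls time =>
      subst hC
      simp only [Set.mem_singleton_iff, Prod.mk.injEq] at h1
      obtain ⟨rfl, rfl, rfl⟩ := h1
      obtain rfl := rtg_basic h3
      exact ⟨.fin, .wait h2.1 h2.2, rfl⟩
    case empty fls =>
      subst hC
      simp only [Set.mem_singleton_iff, Prod.mk.injEq] at h1
      obtain ⟨rfl, rfl, rfl⟩ := h1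
      obtain rfl := rtg_basic h3
      exact ⟨.fin, .empty h2, rfl⟩
  | @trigEvt P Q s t κ h =>
    intro A hC
    obtain ⟨rfl, rfl⟩ := compile_eq_trig tick targetsSat fireSources hC
    exact absurd h (by intro h; cases h)
  | @seqStep S1 S1' S2 s t δ h hne ih =>
    intro A hC
    cases A <;> simp [compile] at hC
    case seq A1 A2 =>
      obtain ⟨h1, h2⟩ := hC
      obtain ⟨A1', hb, rfl⟩ := ih A1 h1
      refine ⟨.seq A1' A2, .seqStep hb ?_, by simp [compile, h2]⟩
      rintro rfl
      exact hne (by simp [compile])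
  | @seqFin S1 S2 s t δ h ih =>
    intro A hC
    cases A <;> simp [compile] at hC
    case seq A1 A2 =>
      obtain ⟨h1, h2⟩ := hC
      obtain ⟨A1', hb, hfin⟩ := ih A1 h1
      obtain ⟨rfl, -⟩ := compile_eq_trig tick targetsSat fireSources hfin.symm
      exact ⟨A2, .seqFin hb, h2.symm⟩
  | @choice1 S1 S2 S1' s t δ h ih =>
    intro A hC
    cases A <;> simp [compile] at hC
    case invoke fls ptl ptt opn spc cts cta =>
      obtain ⟨h1, h2⟩ := hC
      subst h1
      cases h with
      | atomEvt hm hg hr =>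
        simp only [Set.mem_singleton_iff, Prod.mk.injEq] at hm
        obtain ⟨rfl, rfl, rfl⟩ := hm
        obtain rfl := rtg_seq2 hr
        exact ⟨.fin, .invokeSuc hg, rfl⟩
    case ifA c A1 A2 =>
      obtain ⟨h1, h2⟩ := hC
      subst h1
      cases h with
      | seqStep h hne => cases h with | atomEvt _ _ _ => exact absurd rfl hne
      | seqFin h =>
        cases h with
        | atomEvt hm hg hr =>
          simp only [Set.mem_singleton_iff, Prod.mk.injEq] at hm
          obtain ⟨rfl, rfl, rfl⟩ := hm
          obtain rfl := rtg_basic hr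
          exact ⟨A1, .ifT hg, rfl⟩
    case pick H1 H2 =>
      obtain ⟨h1, h2⟩ := hC
      subst h1
      cases H1 with
      | onMessage ptl ptt opn spc A =>
        cases h with
        | seqStep h hne => cases h with | atomEvt _ _ _ => exact absurd rfl hne
        | seqFin h =>
          cases h with
          | atomEvt hm hg hr =>
            simp only [compileEH, Set.mem_singleton_iff, Prod.mk.injEq] at hm
            obtain ⟨rfl, rfl, rfl⟩ := hm
            obtain rfl := rtg_basic hr
            exact ⟨A, .pick1 .onMessage, rfl⟩
      | onAlarm time A =>
        cases h with
        | seqStep h hne => cases h with | atomEvt _ _ _ => exact absurd rfl hne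
        | seqFin h =>
          cases h with
          | atomEvt hm hg hr =>
            simp only [compileEH, Set.mem_singleton_iff, Prod.mk.injEq] at hm
            obtain ⟨rfl, rfl, rfl⟩ := hm
            obtain rfl := rtg_basic hr
            exact ⟨A, .pick1 (.onAlarm hg), rfl⟩
  | @choice2 S1 S2 S2' s t δ h ih =>
    intro A hC
    cases A <;> simp [compile] at hC
    case invoke fls ptl ptt opn spc cts cta =>
      obtain ⟨h1, h2⟩ := hC
      subst h2
      obtain ⟨x, hx, hstep⟩ := esStep_chooseList h
      rcases List.mem_cons.mp hx with rfl | hx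
      · obtain ⟨rfl, rfl, hg⟩ :=
          esStep_failSeq tick targetsSat fireSources hstep
        exact ⟨cta, .invokeFault hg (Or.inr rfl), rfl⟩
      · obtain ⟨a, ha, rfl⟩ := mem_compileList tick targetsSat fireSources hx
        obtain ⟨rfl, rfl, hg⟩ :=
          esStep_failSeq tick targetsSat fireSources hstep
        exact ⟨a, .invokeFault hg (Or.inl ha), rfl⟩
    case ifA c A1 A2 =>
      obtain ⟨h1, h2⟩ := hC
      subst h2
      cases h with
      | seqStep h hne => cases h with | atomEvt _ _ _ => exact absurd rfl hne
      | seqFin h =>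
        cases h with
        | atomEvt hm hg hr =>
          simp only [Set.mem_singleton_iff, Prod.mk.injEq] at hm
          obtain ⟨rfl, rfl, rfl⟩ := hm
          obtain rfl := rtg_basic hr
          exact ⟨A2, .ifF hg, rfl⟩
    case pick H1 H2 =>
      obtain ⟨h1, h2⟩ := hC
      subst h2
      cases H2 with
      | onMessage ptl ptt opn spc A =>
        cases h with
        | seqStep h hne => cases h with | atomEvt _ _ _ => exact absurd rfl hne
        | seqFin h =>
          cases h with
          | atomEvt hm hg hr =>
            simp only [compileEH, Set.mem_singleton_iff, Prod.mk.injEq] at hm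
            obtain ⟨rfl, rfl, rfl⟩ := hm
            obtain rfl := rtg_basic hr
            exact ⟨A, .pick2 .onMessage, rfl⟩
      | onAlarm time A =>
        cases h with
        | seqStep h hne => cases h with | atomEvt _ _ _ => exact absurd rfl hne
        | seqFin h =>
          cases h with
          | atomEvt hm hg hr =>
            simp only [compileEH, Set.mem_singleton_iff, Prod.mk.injEq] at hm
            obtain ⟨rfl, rfl, rfl⟩ := hm
            obtain rfl := rtg_basic hr
            exact ⟨A, .pick2 (.onAlarm hg), rfl⟩
  | @join1 S1 S2 S1' s t δ h ih =>
    intro A hC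
    cases A <;> simp [compile] at hC
    case flow A1 A2 =>
      obtain ⟨h1, h2⟩ := hC
      obtain ⟨A1', hb, rfl⟩ := ih A1 h1
      exact ⟨.flow A1' A2, .flow1 hb, by simp [compile, h2]⟩
  | @join2 S1 S2 S2' s t δ h ih =>
    intro A hC
    cases A <;> simp [compile] at hC
    case flow A1 A2 =>
      obtain ⟨h1, h2⟩ := hC
      obtain ⟨A2', hb, rfl⟩ := ih A2 h2
      exact ⟨.flow A1 A2', .flow2 hb, by simp [compile, h1]⟩
  | @joinFin s κ =>
    intro A hC
    cases A <;> simp [compile] at hC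
    case flow A1 A2 =>
      obtain ⟨h1, h2⟩ := hC
      obtain ⟨rfl, -⟩ := compile_eq_trig tick targetsSat fireSources h1
      obtain ⟨rfl, -⟩ := compile_eq_trig tick targetsSat fireSources h2
      exact ⟨.fin, .flowFin, rfl⟩
  | @iterT b S0 s κ hb hne =>
    intro A hC
    cases A <;> simp [compile] at hC
    case whileA c A0 =>
      obtain ⟨h1, h2⟩ := hC
      subst h1; subst h2
      refine ⟨.seq A0 (.whileA c A0), .whileT hb ?_, rfl⟩
      rintro rfl
      exact hne (by simp [compile])
  | @iterF b S0 s κ hb =>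
    intro A hC
    cases A <;> simp [compile] at hC
    case whileA c A0 =>
      obtain ⟨h1, h2⟩ := hC
      subst h1
      exact ⟨.fin, .whileF hb, rfl⟩

lemma es_to_bpel {S : ES St} {s : St} {δ} {S' : ES St} {t : St}
    (h : esStepB (S, s) δ (S', t)) :
    ∀ A : Activity St, compile tick targetsSat fireSources A = S →
    ∃ A', bpelStep tick targetsSat fireSources A s A' t ∧
      S' = compile tick targetsSat fireSources A' :=
  es_to_bpel' tick targetsSat fireSources h

end Helpers
end BPEL

open PiCore BPEL in
/-- **Completeness of the BPEL/PiCore bisimulation:** trace equivalence implies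
bisimilarity. -/
theorem bisim_complete {St : Type}
    (tick : St → ℕ)
    (targetsSat : Option ((St → Prop) × List String) → St → Prop)
    (fireSources : Option (List (String × (St → Prop))) → St → St) :
    ∀ (B : Activity St) (S : ES St) (s : St),
      TraceEq tick targetsSat fireSources B s S →
      Bisim tick targetsSat fireSources B s S := by
  intro B S s hTE
  refine ⟨fun A u T => T = compile tick targetsSat fireSources A, ?_, ?_⟩
  · intro A u T hT
    subst hT
    refine ⟨?_, ?_, rfl⟩
    · intro A' v hstep
      obtain ⟨δ, hes⟩ := bpel_to_es tick targetsSat fireSources hstep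
      exact ⟨δ, _, hes, rfl⟩
    · intro δ T' v hes
      obtain ⟨A', hb, hT'⟩ := es_to_bpel tick targetsSat fireSources hes A rfl
      exact ⟨A', hb, hT'⟩
  · obtain ⟨fw, _⟩ := hTE
    obtain ⟨tr', ⟨_, hh⟩, heq⟩ := fw [(B, s)] bpelCpts.one rfl
    match tr', hh, heq with
    | (S0, t0) :: tr2, hh, ⟨h1, h2, h3⟩ =>
      simp only [List.head?_cons, Option.some.injEq, Prod.mk.injEq] at hh
      rw [← hh.1, ← h1]
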